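/- Let H, U be Hilbert spaces, A, C : H → H, B : U → H bounded operators. Suppose x₁, x₂, y₁, y₂ : [0,T] → H are C¹ with xᵢ' = A xᵢ − B B* yᵢ, yᵢ' = −A* yᵢ − C*C xᵢ (i = 1,2), and y₁(T) = P₀ x₁(T), y₂(T) = P₀ x₂(T) for a bounded symmetric operator P₀ on H. Then ⟨x₁(0), y₂(0)⟩ = ⟨x₂(0), y₁(0)⟩. -/

import Mathlib

open scoped RealInnerProductSpace

theorem stmt_11
    {H U : Type*} [NormedAddCommGroup H] [InnerProductSpace ℝ H] [CompleteSpace H]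
    [NormedAddCommGroup U] [InnerProductSpace ℝ U] [CompleteSpace U]
    (A C : H →L[ℝ] H) (B : U →L[ℝ] H) (T : ℝ) (hT : 0 < T)
    (P₀ : H →L[ℝ] H) (hP₀symm : ∀ ξ η : H, ⟪P₀ ξ, η⟫ = ⟪ξ, P₀ η⟫)
    (x₁ x₂ y₁ y₂ : ℝ → H)
    (hx₁ : ∀ t ∈ Set.Icc (0 : ℝ) T, HasDerivAt x₁ (A (x₁ t) - B (B.adjoint (y₁ t))) t)
    (hx₂ : ∀ t ∈ Set.Icc (0 : ℝ) T, HasDerivAt x₂ (A (x₂ t) - B (B.adjoint (y₂ t))) t)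
    (hy₁ : ∀ t ∈ Set.Icc (0 : ℝ) T,
      HasDerivAt y₁ (-(A.adjoint (y₁ t)) - C.adjoint (C (x₁ t))) t)
    (hy₂ : ∀ t ∈ Set.Icc (0 : ℝ) T,
      HasDerivAt y₂ (-(A.adjoint (y₂ t)) - C.adjoint (C (x₂ t))) t)
    (hT₁ : y₁ T = P₀ (x₁ T)) (hT₂ : y₂ T = P₀ (x₂ T)) :
    ⟪x₁ 0, y₂ 0⟫ = ⟪x₂ 0, y₁ 0⟫ := by
  set f : ℝ → ℝ := fun t => ⟪x₁ t, y₂ t⟫ - ⟪x₂ t, y₁ t⟫ with hf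
  have hderiv : ∀ t ∈ Set.Icc (0 : ℝ) T, HasDerivAt f 0 t := by
    intro t ht
    have h1 := ((hx₁ t ht).inner ℝ (hy₂ t ht))
    have h2 := ((hx₂ t ht).inner ℝ (hy₁ t ht))
    have h := h1.sub h2
    convert h using 1
    iterate 3 rfl
    simp only [inner_sub_left, inner_sub_right, inner_neg_right,
      ContinuousLinearMap.adjoint_inner_left, ContinuousLinearMap.adjoint_inner_right,
      real_inner_comm (B (B.adjoint (y₁ t)))]
    ring_nf
    have hbc : ⟪B (B.adjoint (y₁ t)), y₂ t⟫ = ⟪B (B.adjoint (y₂ t)), y₁ t⟫ := by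
      rw [← ContinuousLinearMap.adjoint_inner_right, ← ContinuousLinearMap.adjoint_inner_right,
        real_inner_comm, ContinuousLinearMap.adjoint_adjoint]
    rw [hbc, real_inner_comm (C (x₁ t))]
    ring
  have hcont : ContinuousOn f (Set.Icc 0 T) := fun t ht =>
    ((hderiv t ht).continuousAt).continuousWithinAt
  have hconst : f 0 = f T := by
    have := constant_of_has_deriv_right_zero hcont
      (fun t ht => ((hderiv t (Set.mem_Icc_of_Ico ht)).hasDerivWithinAt))
      T (Set.right_mem_Icc.2 hT.le)
    exact this.symm
  have hfT : f T = 0 := by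
    simp only [hf, hT₁, hT₂, sub_eq_zero]
    rw [real_inner_comm, hP₀symm, real_inner_comm]
  have : f 0 = 0 := hconst.trans hfT
  have := sub_eq_zero.mp this
  linarith [this]
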